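/- Let G be a finite connected simple graph on n ≥ 2 vertices whose resistance curvature satisfies κ_i ≥ 0 for all vertices i and Σ_{v∈V} κ_v > 0. Then for all vertices y, z one has Ω_{yz} ≤ 2/(Σ_{v∈V} κ_v); equivalently the maximal commute time satisfies max_{y,z} commute(y,z) ≤ 4·|E|/(Σ_{v∈V} κ_v), where commute(y,z) = 2·|E|·Ω_{yz}. -/

import Mathlib

open Finset SimpleGraph Matrix

/-- The resistance matrix of a graph: `Ω i j = Γ⁻¹ i i + Γ⁻¹ j j - 2 Γ⁻¹ i j`
where `Γ = L + (1/n) J` with `L` the Laplacian and `J` the all-ones matrix. -/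
noncomputable def resistanceMatrix {V : Type*} [Fintype V] [DecidableEq V]
    (G : SimpleGraph V) [DecidableRel G.Adj] : Matrix V V ℝ :=
  Matrix.of fun i j =>
    letI Γinv := (G.lapMatrix ℝ + Matrix.of fun _ _ => (1 : ℝ) / Fintype.card V)⁻¹
    Γinv i i + Γinv j j - 2 * Γinv i j

section CommuteTimeAux

variable {V : Type*} [Fintype V] [DecidableEq V]
  (G : SimpleGraph V) [DecidableRel G.Adj]

/-- `Γ = L + (1/n) J`. -/
noncomputable def GamMat' : Matrix V V ℝ :=
  G.lapMatrix ℝ + Matrix.of fun _ _ => (1 : ℝ) / Fintype.card V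

lemma gam_isUnit_det (hconn : G.Connected) : IsUnit (GamMat' G).det := by
  have hne : Nonempty V := hconn.nonempty
  have hcard : (0:ℝ) < Fintype.card V := by
    exact_mod_cast Fintype.card_pos
  rw [isUnit_iff_ne_zero]
  intro hdet
  obtain ⟨x, hx0, hx⟩ := (Matrix.exists_mulVec_eq_zero_iff).2 hdet
  have hq : x ⬝ᵥ (GamMat' G *ᵥ x) = 0 := by rw [hx, dotProduct_zero]
  have hrow : ∀ i, ((Matrix.of fun _ _ => (1:ℝ)/Fintype.card V : Matrix V V ℝ) *ᵥ x) i
      = (∑ j, x j) / Fintype.card V := by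
    intro i
    simp only [mulVec, dotProduct, Matrix.of_apply]
    rw [← Finset.mul_sum, one_div, inv_mul_eq_div]
  have hsplit : x ⬝ᵥ (GamMat' G *ᵥ x)
      = x ⬝ᵥ (G.lapMatrix ℝ *ᵥ x) + (∑ i, x i)^2 / Fintype.card V := by
    rw [GamMat', add_mulVec, dotProduct_add]
    congr 1
    rw [dotProduct]
    simp_rw [hrow]
    rw [← Finset.sum_mul, sq, mul_div_assoc]
  have hL0 : 0 ≤ x ⬝ᵥ (G.lapMatrix ℝ *ᵥ x) := by
    simpa using (posSemidef_lapMatrix ℝ G).dotProduct_mulVec_nonneg x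
  have hJ0 : 0 ≤ (∑ i, x i)^2 / Fintype.card V := by positivity
  have hLz : x ⬝ᵥ (G.lapMatrix ℝ *ᵥ x) = 0 := by linarith [hsplit ▸ hq]
  have hJz : (∑ i, x i)^2 / Fintype.card V = 0 := by linarith [hsplit ▸ hq]
  have hsumx : ∑ i, x i = 0 := by
    have := (div_eq_zero_iff.mp hJz).resolve_right (by exact_mod_cast hcard.ne')
    exact pow_eq_zero_iff (by norm_num) |>.mp this
  have hadj : ∀ i j : V, G.Adj i j → x i = x j := by
    rw [← lapMatrix_toLinearMap₂'_apply'_eq_zero_iff_forall_adj ℝ G]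
    rw [Matrix.toLinearMap₂'_apply']
    exact hLz
  have hconst : ∀ i j : V, x i = x j := fun i j =>
    ((lapMatrix_toLinearMap₂'_apply'_eq_zero_iff_forall_reachable (G := G) x).mp
      ((lapMatrix_toLinearMap₂'_apply'_eq_zero_iff_forall_adj ℝ G x).mpr hadj)) i j
      (hconn.preconnected i j)
  apply hx0
  funext i
  have : ∑ j, x j = (Fintype.card V : ℝ) * x i := by
    rw [Finset.sum_congr rfl (fun j _ => hconst j i), Finset.sum_const, card_univ,
      nsmul_eq_mul]
  have hxi : x i = 0 := by
    have := this ▸ hsumx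
    rcases mul_eq_zero.mp this with h | h
    · exact absurd h (by exact_mod_cast hcard.ne')
    · exact h
  simpa using hxi


lemma gam_inv_max' (hconn : G.Connected) (hdet : IsUnit (GamMat' G).det) (v z y : V) :
    (GamMat' G)⁻¹ y v - (GamMat' G)⁻¹ y z ≤ (GamMat' G)⁻¹ v v - (GamMat' G)⁻¹ v z := by
  have hne : Nonempty V := hconn.nonempty
  have hcard : (0:ℝ) < Fintype.card V := by exact_mod_cast Fintype.card_pos
  set M := (GamMat' G)⁻¹ with hM
  have hGM : GamMat' G * M = 1 := Matrix.mul_nonsing_inv _ hdet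
  have hMG : M * GamMat' G = 1 := Matrix.nonsing_inv_mul _ hdet
  set g : V → ℝ := fun i => M i v - M i z with hg
  have hGamg : ∀ i, (GamMat' G *ᵥ g) i
      = (if i = v then (1:ℝ) else 0) - (if i = z then 1 else 0) := by
    intro i
    have h1 : (GamMat' G *ᵥ g) i = (GamMat' G * M) i v - (GamMat' G * M) i z := by
      simp only [mulVec, dotProduct, Matrix.mul_apply, hg, mul_sub,
        Finset.sum_sub_distrib]
    rw [h1, hGM, Matrix.one_apply, Matrix.one_apply]
  have hJrow : ∀ (x : V → ℝ) (i : V),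
      ((Matrix.of fun _ _ => (1:ℝ)/Fintype.card V : Matrix V V ℝ) *ᵥ x) i
        = (∑ j, x j) / Fintype.card V := by
    intro x i
    simp only [mulVec, dotProduct, Matrix.of_apply]
    rw [← Finset.mul_sum, one_div, inv_mul_eq_div]
  have hGam1 : GamMat' G *ᵥ (fun _ => (1:ℝ)) = fun _ => 1 := by
    funext i
    rw [GamMat', add_mulVec]
    have h0 := congrFun (lapMatrix_mulVec_const_eq_zero (R := ℝ) (G := G)) i
    simp only [Pi.add_apply, h0, Pi.zero_apply, zero_add, hJrow fun _ => (1:ℝ),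
      Finset.sum_const, card_univ, nsmul_eq_mul, mul_one]
    field_simp
  have hM1 : M *ᵥ (fun _ => (1:ℝ)) = fun _ => 1 := by
    calc M *ᵥ (fun _ => (1:ℝ)) = M *ᵥ (GamMat' G *ᵥ fun _ => 1) := by rw [hGam1]
      _ = fun _ => 1 := by rw [Matrix.mulVec_mulVec, hMG, Matrix.one_mulVec]
  have hGsym : (GamMat' G)ᵀ = GamMat' G :=
    (isSymm_lapMatrix (R := ℝ) G).add (by ext i j; rfl)
  have hMsym : ∀ a b, M a b = M b a := by
    intro a b
    have hs : Mᵀ = M := by rw [hM, Matrix.transpose_nonsing_inv, hGsym]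
    exact congrFun (congrFun hs b) a
  have hcol : ∀ w : V, ∑ i, M i w = 1 := by
    intro w
    have h1 := congrFun hM1 w
    simp only [mulVec, dotProduct, mul_one] at h1
    calc ∑ i, M i w = ∑ i, M w i := by simp_rw [fun i => hMsym i w]
      _ = 1 := h1
  have hsumg : ∑ i, g i = 0 := by
    simp only [hg]
    rw [Finset.sum_sub_distrib, hcol, hcol, sub_self]
  have hLg : ∀ i, (G.lapMatrix ℝ *ᵥ g) i
      = (if i = v then (1:ℝ) else 0) - (if i = z then 1 else 0) := by
    intro i
    have h2 := hGamg i
    rw [GamMat', add_mulVec] at h2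
    simp only [Pi.add_apply, hJrow g, hsumg, zero_div, add_zero] at h2
    exact h2
  have closure : ∀ j, j ≠ v → (∀ k, g k ≤ g j) → ∀ k, G.Adj j k → g k = g j := by
    intro j hjv hmax k hadj
    have h1 : (G.lapMatrix ℝ *ᵥ g) j ≤ 0 := by
      rw [hLg j, if_neg hjv]
      split <;> norm_num
    have he : ∑ u ∈ G.neighborFinset j, (g j - g u)
        = (G.degree j : ℝ) * g j - ∑ u ∈ G.neighborFinset j, g u := by
      rw [Finset.sum_sub_distrib, Finset.sum_const, card_neighborFinset_eq_degree,
        nsmul_eq_mul]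
    have h2 : (G.lapMatrix ℝ *ᵥ g) j = ∑ u ∈ G.neighborFinset j, (g j - g u) := by
      rw [lapMatrix_mulVec_apply, he]
    have h3 : ∀ u ∈ G.neighborFinset j, 0 ≤ g j - g u := fun u _ => sub_nonneg.mpr (hmax u)
    have h4 : ∑ u ∈ G.neighborFinset j, (g j - g u) = 0 :=
      le_antisymm (h2 ▸ h1) (Finset.sum_nonneg h3)
    have h5 := (Finset.sum_eq_zero_iff_of_nonneg h3).mp h4 k (by rwa [G.mem_neighborFinset])
    linarith
  have key : ∀ (a b : V) (w : G.Walk a b), b = v → (∀ k, g k ≤ g a) → g a ≤ g v := by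
    intro a b w
    induction w with
    | nil => intro hb _; subst hb; exact le_refl _
    | @cons a c b hadj p ih =>
      intro hb hmax
      by_cases hav : a = v
      · rw [hav]
      · have hc : g c = g a := closure a hav hmax c hadj
        have := ih hb (fun k => hc ▸ hmax k)
        linarith
  obtain ⟨i, _, hi⟩ := Finset.exists_max_image Finset.univ g ⟨v, Finset.mem_univ v⟩
  obtain ⟨w⟩ := hconn.preconnected i v
  have hiv : g i ≤ g v := key i v w rfl (fun k => hi k (Finset.mem_univ k))
  exact le_trans (hi y (Finset.mem_univ y)) hiv


lemma gam_inv_symm' (a b : V) : (GamMat' G)⁻¹ a b = (GamMat' G)⁻¹ b a := by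
  have hGsym : (GamMat' G)ᵀ = GamMat' G :=
    (isSymm_lapMatrix (R := ℝ) G).add (by ext i j; rfl)
  have hs : ((GamMat' G)⁻¹)ᵀ = (GamMat' G)⁻¹ := by
    rw [Matrix.transpose_nonsing_inv, hGsym]
  exact congrFun (congrFun hs b) a

end CommuteTimeAux

/-- Refined commute time upper bound in terms of the total curvature: if the curvature
is nonnegative with positive sum, then `Ω y z ≤ 2/(∑ κ)` for all vertices, i.e. every
commute time `2 |E| Ω y z` is at most `4 |E| / (∑ κ)`. -/
theorem commute_time_le_inv_total_curvature
    {V : Type*} [Fintype V] [DecidableEq V]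
    (G : SimpleGraph V) [DecidableRel G.Adj]
    (hconn : G.Connected) (hn : 2 ≤ Fintype.card V)
    (κ : V → ℝ) (hκ : resistanceMatrix G *ᵥ κ = fun _ => 1)
    (hcurv : ∀ i, 0 ≤ κ i) (hsum : 0 < ∑ v, κ v) :
    ∀ y z : V,
      resistanceMatrix G y z ≤ 2 / (∑ v, κ v) ∧
      2 * G.edgeFinset.card * resistanceMatrix G y z ≤
        4 * G.edgeFinset.card / (∑ v, κ v) := by

  intro y z
  have hdet := gam_isUnit_det G hconn
  have hΩ : ∀ a b : V, resistanceMatrix G a b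
      = (GamMat' G)⁻¹ a a + (GamMat' G)⁻¹ b b - 2 * (GamMat' G)⁻¹ a b := fun a b => rfl
  have hΩsym : ∀ a b : V, resistanceMatrix G a b = resistanceMatrix G b a := by
    intro a b
    rw [hΩ, hΩ, gam_inv_symm' G a b]
    ring
  have ht : ∀ v : V, resistanceMatrix G y z
      ≤ resistanceMatrix G y v + resistanceMatrix G v z := by
    intro v
    have h := gam_inv_max' G hconn hdet v z y
    rw [hΩ, hΩ, hΩ]
    linarith
  have hy := congrFun hκ y
  have hz := congrFun hκ z
  simp only [mulVec, dotProduct] at hy hz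
  have key : (∑ v, κ v) * resistanceMatrix G y z ≤ 2 := by
    calc (∑ v, κ v) * resistanceMatrix G y z
        = ∑ v, κ v * resistanceMatrix G y z := by rw [Finset.sum_mul]
      _ ≤ ∑ v, κ v * (resistanceMatrix G y v + resistanceMatrix G v z) :=
          Finset.sum_le_sum fun v _ => mul_le_mul_of_nonneg_left (ht v) (hcurv v)
      _ = ∑ v, resistanceMatrix G y v * κ v + ∑ v, resistanceMatrix G z v * κ v := by
          rw [← Finset.sum_add_distrib]
          exact Finset.sum_congr rfl fun v _ => by rw [hΩsym v z]; ring
      _ = 2 := by rw [hy, hz]; norm_num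
  have hfirst : resistanceMatrix G y z ≤ 2 / (∑ v, κ v) := by
    rw [le_div_iff₀ hsum, mul_comm]
    exact key
  refine ⟨hfirst, ?_⟩
  have hE : (0:ℝ) ≤ 2 * (G.edgeFinset.card : ℝ) := by positivity
  have h2 := mul_le_mul_of_nonneg_left hfirst hE
  refine le_trans h2 (le_of_eq ?_)
  field_simp
  ring
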